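/- Let Φ(x) = ∫_{-∞}^x (1/√(2π)) e^{-u²/2} du be the cumulative distribution function of the standard Gaussian distribution. There exists a constant d > 0 such that for all λ, λ' ∈ ℝ: |Φ(λ) − Φ(λ')| ≤ 1 − exp(−d(|λ − λ'| + (λ − λ')²)). -/

import Mathlib

open MeasureTheory Real Set

/-- The standard Gaussian cumulative distribution function. -/
noncomputable def gaussCDF (x : ℝ) : ℝ :=
  ∫ u in Set.Iic x, (1 / Real.sqrt (2 * Real.pi)) * Real.exp (-u ^ 2 / 2)

namespace ProbitA3

/-- The standard Gaussian density. -/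
noncomputable def gpdf (u : ℝ) : ℝ :=
  (1 / Real.sqrt (2 * Real.pi)) * Real.exp (-u ^ 2 / 2)

lemma cdf_eq (x : ℝ) : gaussCDF x = ∫ u in Set.Iic x, gpdf u := rfl

lemma sqrt_two_pi_pos : 0 < Real.sqrt (2 * Real.pi) :=
  Real.sqrt_pos.2 (by positivity)

lemma sqrt_two_pi_le_three : Real.sqrt (2 * Real.pi) ≤ 3 := by
  nlinarith [Real.sq_sqrt (show (0:ℝ) ≤ 2 * Real.pi by positivity),
    Real.sqrt_nonneg (2 * Real.pi), Real.pi_le_four]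

lemma two_le_sqrt_two_pi : 2 ≤ Real.sqrt (2 * Real.pi) := by
  nlinarith [Real.sq_sqrt (show (0:ℝ) ≤ 2 * Real.pi by positivity),
    Real.sqrt_nonneg (2 * Real.pi), Real.pi_gt_three]

lemma gpdf_pos (u : ℝ) : 0 < gpdf u := by
  unfold gpdf; positivity

lemma gpdf_le_half (u : ℝ) : gpdf u ≤ 1 / 2 := by
  unfold gpdf
  have h1 : Real.exp (-u ^ 2 / 2) ≤ 1 :=
    Real.exp_le_one_iff.2 (by nlinarith [sq_nonneg u])
  have h2 : 1 / Real.sqrt (2 * Real.pi) ≤ 1 / 2 :=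
    one_div_le_one_div_of_le (by norm_num) two_le_sqrt_two_pi
  have h3 : 0 < 1 / Real.sqrt (2 * Real.pi) := by positivity
  nlinarith [Real.exp_pos (-u ^ 2 / 2)]

lemma gpdf_integrable : Integrable gpdf := by
  have h : Integrable (fun u : ℝ => Real.exp (-(2⁻¹ : ℝ) * u ^ 2)) :=
    integrable_exp_neg_mul_sq (by norm_num)
  have h2 := h.const_mul (1 / Real.sqrt (2 * Real.pi))
  have : gpdf = fun u : ℝ => 1 / Real.sqrt (2 * Real.pi) * Real.exp (-(2⁻¹ : ℝ) * u ^ 2) := by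
    funext u
    unfold gpdf
    congr 1
    ring
  rw [this]
  exact h2

lemma gpdf_total : ∫ u, gpdf u = 1 := by
  have h : ∫ u : ℝ, Real.exp (-(2⁻¹ : ℝ) * u ^ 2) = Real.sqrt (Real.pi / 2⁻¹) :=
    integral_gaussian 2⁻¹
  have heq : gpdf = fun u : ℝ =>
      1 / Real.sqrt (2 * Real.pi) * Real.exp (-(2⁻¹ : ℝ) * u ^ 2) := by
    funext u; unfold gpdf; congr 1; ring
  rw [heq, MeasureTheory.integral_const_mul, h,
    show Real.pi / (2⁻¹ : ℝ) = 2 * Real.pi by ring]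
  field_simp

lemma cdf_sub (l l' : ℝ) :
    gaussCDF l - gaussCDF l' = ∫ u in l'..l, gpdf u := by
  rw [cdf_eq, cdf_eq]
  exact intervalIntegral.integral_Iic_sub_Iic gpdf_integrable.integrableOn
    gpdf_integrable.integrableOn

lemma cdf_mono {a b : ℝ} (h : a ≤ b) : gaussCDF a ≤ gaussCDF b := by
  have h2 : 0 ≤ ∫ u in a..b, gpdf u :=
    intervalIntegral.integral_nonneg h fun u _ => (gpdf_pos u).le
  have := cdf_sub b a
  linarith

lemma cdf_nonneg (x : ℝ) : 0 ≤ gaussCDF x := by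
  rw [cdf_eq]
  exact setIntegral_nonneg measurableSet_Iic fun u _ => (gpdf_pos u).le

lemma cdf_le_one (x : ℝ) : gaussCDF x ≤ 1 := by
  rw [cdf_eq, ← gpdf_total]
  exact setIntegral_le_integral gpdf_integrable
    (Filter.Eventually.of_forall fun u => (gpdf_pos u).le)

lemma cdf_lip {l l' : ℝ} (h : l' ≤ l) :
    gaussCDF l - gaussCDF l' ≤ 1 / 2 * (l - l') := by
  rw [cdf_sub]
  calc ∫ u in l'..l, gpdf u
      ≤ ∫ _u in l'..l, (1 / 2 : ℝ) := by
        apply intervalIntegral.integral_mono_on h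
          gpdf_integrable.intervalIntegrable intervalIntegrable_const
        intro u _
        exact gpdf_le_half u
    _ = 1 / 2 * (l - l') := by
        rw [intervalIntegral.integral_const, smul_eq_mul]; ring

lemma cdf_zero : gaussCDF 0 = 1 / 2 := by
  have heven : ∀ u : ℝ, gpdf (-u) = gpdf u := by
    intro u; unfold gpdf; rw [neg_sq]
  have h1 := integral_comp_neg_Iic (0 : ℝ) gpdf
  simp only [neg_zero] at h1
  have h1' : (∫ u in Iic (0 : ℝ), gpdf u) = ∫ u in Ioi (0 : ℝ), gpdf u := by
    rw [← h1]
    exact setIntegral_congr_fun measurableSet_Iic fun u _ => (heven u).symm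
  have h2 := intervalIntegral.integral_Iic_add_Ioi (b := (0 : ℝ))
    gpdf_integrable.integrableOn gpdf_integrable.integrableOn
  rw [gpdf_total] at h2
  rw [cdf_eq]
  linarith

lemma tail_lb {h : ℝ} (hh : 0 ≤ h) : gpdf (h + 1) ≤ 1 - gaussCDF h := by
  have h2 := intervalIntegral.integral_Iic_add_Ioi (b := h)
    gpdf_integrable.integrableOn gpdf_integrable.integrableOn
  rw [gpdf_total] at h2
  rw [cdf_eq] at *
  have key : gpdf (h + 1) ≤ ∫ u in Ioi h, gpdf u := by
    have step1 : gpdf (h + 1) ≤ ∫ u in Ioc h (h + 1), gpdf u := by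
      have hconst : (∫ _u in Ioc h (h + 1), gpdf (h + 1)) = gpdf (h + 1) := by
        rw [setIntegral_const, Real.volume_real_Ioc, smul_eq_mul]
        rw [show h + 1 - h = 1 by ring]
        simp
      rw [← hconst]
      apply setIntegral_mono_on (integrableOn_const (by
        rw [Real.volume_Ioc]; exact ENNReal.ofReal_ne_top))
        gpdf_integrable.integrableOn measurableSet_Ioc
      intro u hu
      unfold gpdf
      have hu1 : h < u := hu.1
      have hu2 : u ≤ h + 1 := hu.2
      have hsq : u ^ 2 ≤ (h + 1) ^ 2 := by nlinarith
      have := Real.exp_le_exp.2 (show -(h + 1) ^ 2 / 2 ≤ -u ^ 2 / 2 by linarith)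
      have hc : 0 < 1 / Real.sqrt (2 * Real.pi) := by positivity
      nlinarith
    have step2 : (∫ u in Ioc h (h + 1), gpdf u) ≤ ∫ u in Ioi h, gpdf u := by
      apply setIntegral_mono_set gpdf_integrable.integrableOn
        (Filter.Eventually.of_forall fun u => (gpdf_pos u).le)
      exact HasSubset.Subset.eventuallyLE Ioc_subset_Ioi_self
    linarith
  linarith

lemma exp_neg_three_le : Real.exp (-3 : ℝ) ≤ 1 / 2 := by
  have h3 : (4 : ℝ) ≤ Real.exp 3 := by linarith [Real.add_one_le_exp (3 : ℝ)]
  rw [Real.exp_neg, ← one_div]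
  have := one_div_le_one_div_of_le (by norm_num : (0 : ℝ) < 4) h3
  linarith

lemma exp_neg_two_le : Real.exp (-2 : ℝ) ≤ 1 / 3 := by
  have h3 : (3 : ℝ) ≤ Real.exp 2 := by linarith [Real.add_one_le_exp (2 : ℝ)]
  rw [Real.exp_neg, ← one_div]
  exact one_div_le_one_div_of_le (by norm_num) h3

lemma key {l l' : ℝ} (hle : l' ≤ l) :
    gaussCDF l - gaussCDF l' ≤
      1 - Real.exp (-(3 * ((l - l') + (l - l') ^ 2))) := by
  set h := l - l' with hdef
  have h0 : 0 ≤ h := by simp only [hdef]; linarith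
  rcases le_or_gt h 1 with hsmall | hbig
  · -- small increments: Lipschitz + convexity of exp
    have lip := cdf_lip hle
    have conv : Real.exp (-(3 * h)) ≤ 1 - h * (1 - Real.exp (-3)) := by
      have hc := convexOn_exp.2 (Set.mem_univ (0 : ℝ)) (Set.mem_univ (-3 : ℝ))
        (by linarith : (0 : ℝ) ≤ 1 - h) h0 (by ring)
      simp only [smul_eq_mul, mul_zero, zero_add, Real.exp_zero] at hc
      calc Real.exp (-(3 * h)) = Real.exp (h * (-3)) := by ring_nf
        _ ≤ (1 - h) * 1 + h * Real.exp (-3) := hc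
        _ = 1 - h * (1 - Real.exp (-3)) := by ring
    have hmono : Real.exp (-(3 * (h + h ^ 2))) ≤ Real.exp (-(3 * h)) :=
      Real.exp_le_exp.2 (by nlinarith)
    have he3 := exp_neg_three_le
    have : gaussCDF l - gaussCDF l' ≤ 1 / 2 * h := lip
    nlinarith
  · -- large increments
    have hexp2 : Real.exp (-(3 * (h + h ^ 2))) ≤ 1 / 2 := by
      have : Real.exp (-(3 * (h + h ^ 2))) ≤ Real.exp (-3 : ℝ) :=
        Real.exp_le_exp.2 (by nlinarith)
      linarith [exp_neg_three_le]
    rcases le_or_gt l 0 with hl | hl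
    · have e1 : gaussCDF l ≤ 1 / 2 := by
        rw [← cdf_zero]; exact cdf_mono hl
      have e2 : 0 ≤ gaussCDF l' := cdf_nonneg l'
      linarith
    rcases le_or_gt 0 l' with hl' | hl'
    · have e1 : gaussCDF l ≤ 1 := cdf_le_one l
      have e2 : 1 / 2 ≤ gaussCDF l' := by
        rw [← cdf_zero]; exact cdf_mono hl'
      linarith
    · -- l' < 0 < l, so l ≤ h
      have hlh : l ≤ h := by simp only [hdef]; linarith
      have e1 : gaussCDF l ≤ gaussCDF h := cdf_mono hlh
      have e2 : 0 ≤ gaussCDF l' := cdf_nonneg l'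
      have tail : gpdf (h + 1) ≤ 1 - gaussCDF h := tail_lb h0
      have hexp : Real.exp (-(3 * (h + h ^ 2))) ≤ gpdf (h + 1) := by
        unfold gpdf
        have c1 : (1 : ℝ) / 3 ≤ 1 / Real.sqrt (2 * Real.pi) :=
          one_div_le_one_div_of_le sqrt_two_pi_pos sqrt_two_pi_le_three
        have c2 : Real.exp (-(3 * (h + h ^ 2))) ≤
            Real.exp (-2 : ℝ) * Real.exp (-(h + 1) ^ 2 / 2) := by
          rw [← Real.exp_add]
          exact Real.exp_le_exp.2 (by nlinarith)
        have c3 : Real.exp (-2 : ℝ) * Real.exp (-(h + 1) ^ 2 / 2) ≤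
            1 / 3 * Real.exp (-(h + 1) ^ 2 / 2) :=
          mul_le_mul_of_nonneg_right exp_neg_two_le (Real.exp_pos _).le
        have c4 : 1 / 3 * Real.exp (-(h + 1) ^ 2 / 2) ≤
            1 / Real.sqrt (2 * Real.pi) * Real.exp (-(h + 1) ^ 2 / 2) :=
          mul_le_mul_of_nonneg_right c1 (Real.exp_pos _).le
        linarith
      linarith

end ProbitA3

/-- Condition A3 for the probit autoregressive model: the increment of the
standard Gaussian cdf is bounded by `1 - exp(-d(h + h²))` with `h = |λ - λ'|`. -/
theorem probit_A3 :
    ∃ d : ℝ, 0 < d ∧ ∀ l l' : ℝ,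
      |gaussCDF l - gaussCDF l'| ≤
        1 - Real.exp (-(d * (|l - l'| + (l - l') ^ 2))) := by
  refine ⟨3, by norm_num, fun l l' => ?_⟩
  rcases le_total l' l with hle | hle
  · rw [abs_of_nonneg (sub_nonneg.2 (ProbitA3.cdf_mono hle)),
      abs_of_nonneg (sub_nonneg.2 hle)]
    exact ProbitA3.key hle
  · rw [abs_sub_comm, abs_of_nonneg (sub_nonneg.2 (ProbitA3.cdf_mono hle)),
      abs_sub_comm, abs_of_nonneg (sub_nonneg.2 hle),
      show (l - l') ^ 2 = (l' - l) ^ 2 by ring]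
    exact ProbitA3.key hle
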